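/- arXiv:math/9907102 — 2 statements merged into one kernel-verified Lean document; each statement's English description precedes it below -/
import Mathlib

section
/- Let A(ξ,λ) = Σ_{j=2μ}^{2m} λ^{2m−j} A_j(ξ) be N-elliptic with parameter in [0,∞). Then for every λ₀ > 0 there exists a constant C = C(λ₀) > 0, independent of u and λ, such that for all λ ≥ λ₀ and all Schwartz functions u on ℝⁿ: ∫_{ℝⁿ} (1+|ξ|²)^μ (λ²+|ξ|²)^{m−μ} |Fu(ξ)|² dξ ≤ C ( ∫_{ℝⁿ} (1+|ξ|²)^{−μ} (λ²+|ξ|²)^{−(m−μ)} |A(ξ,λ)|² |Fu(ξ)|² dξ + λ^{2m−2μ} ∫_{ℝⁿ} |u(x)|² dx ). -/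
open MeasureTheory Finset

noncomputable section

/-- `A : ℝⁿ → ℂ` is a (complex-valued) polynomial map, homogeneous of degree `j`
(under positive scaling). -/
def IsHomogPoly (n j : ℕ) (A : EuclideanSpace ℝ (Fin n) → ℂ) : Prop :=
  (∃ p : MvPolynomial (Fin n) ℂ, ∀ ξ, A ξ = MvPolynomial.eval (fun i => (ξ i : ℂ)) p) ∧
    ∀ t : ℝ, 0 < t → ∀ ξ, A (t • ξ) = (t : ℂ) ^ j * A ξ

/-- The operator pencil `A(ξ,λ) = Σ_{j=2μ}^{2m} λ^{2m−j} A_j(ξ)`. -/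
def pencil {n : ℕ} (m μ : ℕ) (A : ℕ → EuclideanSpace ℝ (Fin n) → ℂ)
    (ξ : EuclideanSpace ℝ (Fin n)) (lam : ℝ) : ℂ :=
  ∑ j ∈ Finset.Icc (2 * μ) (2 * m), (lam : ℂ) ^ (2 * m - j) * A j ξ

/-- `N`-ellipticity with parameter in `[0,∞)`. -/
def NElliptic {n : ℕ} (m μ : ℕ) (A : ℕ → EuclideanSpace ℝ (Fin n) → ℂ) : Prop :=
  ∃ C > (0 : ℝ), ∀ (ξ : EuclideanSpace ℝ (Fin n)) (lam : ℝ), 0 ≤ lam →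
    C * ‖ξ‖ ^ (2 * μ) * (lam + ‖ξ‖) ^ (2 * m - 2 * μ) ≤ ‖pencil m μ A ξ lam‖

/-- The Fourier transform `Fu(ξ) = (2π)^{-n/2} ∫ e^{-i x·ξ} u(x) dx`. -/
def myFourier {n : ℕ} (u : EuclideanSpace ℝ (Fin n) → ℂ) (ξ : EuclideanSpace ℝ (Fin n)) : ℂ :=
  ((2 * Real.pi) ^ (-(n : ℝ) / 2) : ℝ) *
    ∫ x : EuclideanSpace ℝ (Fin n), Complex.exp (-Complex.I * ((inner ℝ x ξ : ℝ) : ℂ)) * u x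

section Aux

open FourierTransform Real Complex SchwartzMap
open scoped RealInnerProductSpace

variable {V : Type*} [NormedAddCommGroup V] [InnerProductSpace ℝ V] [MeasurableSpace V]
  [BorelSpace V] [FiniteDimensional ℝ V]

lemma fourier_conj' (h : V → ℂ) (x : V) :
    𝓕 (fun ξ => (starRingEnd ℂ) (h ξ)) x = (starRingEnd ℂ) (𝓕⁻ h x) := by
  rw [Real.fourier_eq', Real.fourierInv_eq', ← integral_conj]
  congr 1
  ext ξ
  rw [smul_eq_mul, smul_eq_mul, map_mul, ← Complex.exp_conj]
  congr 2
  rw [map_mul, Complex.conj_ofReal, Complex.conj_I]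
  push_cast
  ring

lemma parseval_schwartz' (u : SchwartzMap V ℂ) :
    ∫ ξ, ‖𝓕 (⇑u) ξ‖ ^ 2 = ∫ x, ‖u x‖ ^ 2 := by
  have hf : Integrable (⇑u) := u.integrable
  have hF : Integrable (𝓕 ⇑u) := by
    have := (SchwartzMap.fourierTransformCLM ℂ u).integrable (μ := volume)
    rwa [SchwartzMap.fourierTransformCLM_apply, SchwartzMap.fourier_coe] at this
  have hg : Integrable (fun ξ => (starRingEnd ℂ) (𝓕 (⇑u) ξ)) := by
    refine hF.mono (RCLike.continuous_conj.comp_aestronglyMeasurable hF.1) ?_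
    filter_upwards with ξ
    simp
  have hL : Continuous fun p : V × V => (innerₗ V) p.1 p.2 := continuous_inner
  have hflip : (innerₗ V).flip = innerₗ V := by
    apply LinearMap.ext₂
    intro x y
    simp [real_inner_comm x y]
  have key := VectorFourier.integral_fourierIntegral_smul_eq_flip
    (e := Real.fourierChar) (L := innerₗ V) (μ := volume) (ν := volume)
    Real.continuous_fourierChar hL hf hg
  rw [hflip] at key
  have hinv : 𝓕⁻ (𝓕 ⇑u) = ⇑u := u.continuous.fourierInv_fourier_eq hf hF
  have heq : (fun x => u x • (VectorFourier.fourierIntegral 𝐞 volume (innerₗ V)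
      (fun ξ => (starRingEnd ℂ) (𝓕 (⇑u) ξ)) x)) = fun x => u x * (starRingEnd ℂ) (u x) := by
    funext x
    have : VectorFourier.fourierIntegral 𝐞 volume (innerₗ V)
        (fun ξ => (starRingEnd ℂ) (𝓕 (⇑u) ξ)) x
        = 𝓕 (fun ξ => (starRingEnd ℂ) (𝓕 (⇑u) ξ)) x := rfl
    rw [this, fourier_conj', hinv, smul_eq_mul]
  rw [heq] at key
  have key2 : ∫ ξ, 𝓕 (⇑u) ξ * (starRingEnd ℂ) (𝓕 (⇑u) ξ) =
      ∫ x, u x * (starRingEnd ℂ) (u x) := key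
  have lhs : ∀ z : ℂ, z * (starRingEnd ℂ) z = ((‖z‖ ^ 2 : ℝ) : ℂ) := by
    intro z
    rw [Complex.mul_conj, Complex.normSq_eq_norm_sq]
  simp_rw [lhs] at key2
  have cast_int : ∀ f : V → ℝ, ∫ x, ((f x : ℝ) : ℂ) = ((∫ x, f x : ℝ) : ℂ) :=
    fun f => integral_ofReal
  rw [cast_int, cast_int] at key2
  exact_mod_cast key2

variable {n : ℕ}

lemma myFourier_eq (u : EuclideanSpace ℝ (Fin n) → ℂ) (ξ : EuclideanSpace ℝ (Fin n)) :
    myFourier u ξ = ((2 * Real.pi) ^ (-(n : ℝ) / 2) : ℝ) * 𝓕 u ((2 * Real.pi)⁻¹ • ξ) := by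
  rw [myFourier, Real.fourier_eq']
  congr 1
  congr 1
  funext x
  rw [smul_eq_mul]
  congr 1
  rw [real_inner_smul_right]
  have ht : (-2 * Real.pi * ((2 * Real.pi)⁻¹ * ((inner ℝ x ξ : ℝ)))) = -(inner ℝ x ξ : ℝ) := by
    field_simp
  rw [ht]
  push_cast
  ring

lemma norm_myFourier_sq (u : EuclideanSpace ℝ (Fin n) → ℂ) (ξ : EuclideanSpace ℝ (Fin n)) :
    ‖myFourier u ξ‖ ^ 2 = ((2 * Real.pi) ^ (-(n : ℝ)) : ℝ) * ‖𝓕 u ((2 * Real.pi)⁻¹ • ξ)‖ ^ 2 := by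
  rw [myFourier_eq, norm_mul, mul_pow, Complex.norm_real, Real.norm_eq_abs]
  congr 1
  rw [_root_.sq_abs, ← Real.rpow_natCast _ 2, ← Real.rpow_mul (by positivity)]
  norm_num

lemma integral_norm_myFourier_sq (u : SchwartzMap (EuclideanSpace ℝ (Fin n)) ℂ) :
    ∫ ξ, ‖myFourier (⇑u) ξ‖ ^ 2 = ∫ x, ‖u x‖ ^ 2 := by
  have h1 : ∀ ξ : EuclideanSpace ℝ (Fin n), ‖myFourier (⇑u) ξ‖ ^ 2
      = ((2 * Real.pi) ^ (-(n : ℝ)) : ℝ) * ‖𝓕 (⇑u) ((2 * Real.pi)⁻¹ • ξ)‖ ^ 2 :=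
    norm_myFourier_sq _
  simp_rw [h1]
  rw [integral_const_mul]
  rw [MeasureTheory.Measure.integral_comp_inv_smul_of_nonneg volume
    (fun η => ‖𝓕 (⇑u) η‖ ^ 2) (by positivity : (0:ℝ) ≤ 2 * Real.pi)]
  rw [finrank_euclideanSpace_fin, smul_eq_mul, ← mul_assoc]
  have h2 : ((2 * Real.pi) ^ (-(n : ℝ)) : ℝ) * (2 * Real.pi) ^ n = 1 := by
    rw [← Real.rpow_natCast (2 * Real.pi) n, ← Real.rpow_add (by positivity)]
    simp
  rw [h2, one_mul, parseval_schwartz' u]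

lemma coord_le_norm (ξ : EuclideanSpace ℝ (Fin n)) (i : Fin n) : |ξ i| ≤ ‖ξ‖ := by
  rw [EuclideanSpace.norm_eq, ← Real.sqrt_sq_eq_abs (ξ i)]
  apply Real.sqrt_le_sqrt
  have h : ξ i ^ 2 = ‖ξ i‖ ^ 2 := by rw [Real.norm_eq_abs, _root_.sq_abs]
  rw [h]
  exact Finset.single_le_sum (f := fun j => ‖ξ j‖ ^ 2) (fun j _ => by positivity)
    (Finset.mem_univ i)

lemma poly_growth (p : MvPolynomial (Fin n) ℂ) :
    ∃ C : ℝ, ∃ D : ℕ, 0 ≤ C ∧ ∀ ξ : EuclideanSpace ℝ (Fin n),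
      ‖MvPolynomial.eval (fun i => (ξ i : ℂ)) p‖ ≤ C * (1 + ‖ξ‖) ^ D := by
  induction p using MvPolynomial.induction_on with
  | C a =>
      exact ⟨‖a‖, 0, norm_nonneg _, fun ξ => by simp⟩
  | add p q hp hq =>
      obtain ⟨C1, D1, hC1, h1⟩ := hp
      obtain ⟨C2, D2, hC2, h2⟩ := hq
      refine ⟨C1 + C2, max D1 D2, by positivity, fun ξ => ?_⟩
      have hb : (1 : ℝ) ≤ 1 + ‖ξ‖ := by simp [norm_nonneg]
      calc ‖MvPolynomial.eval (fun i => (ξ i : ℂ)) (p + q)‖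
          ≤ ‖MvPolynomial.eval (fun i => (ξ i : ℂ)) p‖
            + ‖MvPolynomial.eval (fun i => (ξ i : ℂ)) q‖ := by
            rw [map_add]; exact norm_add_le _ _
        _ ≤ C1 * (1 + ‖ξ‖) ^ D1 + C2 * (1 + ‖ξ‖) ^ D2 := add_le_add (h1 ξ) (h2 ξ)
        _ ≤ C1 * (1 + ‖ξ‖) ^ max D1 D2 + C2 * (1 + ‖ξ‖) ^ max D1 D2 :=
            add_le_add
              (mul_le_mul_of_nonneg_left (pow_le_pow_right₀ hb (le_max_left _ _)) hC1)
              (mul_le_mul_of_nonneg_left (pow_le_pow_right₀ hb (le_max_right _ _)) hC2)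
        _ = (C1 + C2) * (1 + ‖ξ‖) ^ max D1 D2 := by ring
  | mul_X p i hp =>
      obtain ⟨C, D, hC, h⟩ := hp
      refine ⟨C, D + 1, hC, fun ξ => ?_⟩
      rw [map_mul, norm_mul, MvPolynomial.eval_X, pow_succ, ← mul_assoc]
      have h2 : ‖((ξ i : ℂ))‖ ≤ 1 + ‖ξ‖ := by
        rw [Complex.norm_real, Real.norm_eq_abs]
        exact (coord_le_norm ξ i).trans (by linarith [norm_nonneg ξ])
      exact mul_le_mul (h ξ) h2 (norm_nonneg _) (by positivity)

lemma growth_sum {g : ℕ → EuclideanSpace ℝ (Fin n) → ℂ} (s : Finset ℕ)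
    (h : ∀ j ∈ s, ∃ C : ℝ, ∃ D : ℕ, 0 ≤ C ∧ ∀ ξ, ‖g j ξ‖ ≤ C * (1 + ‖ξ‖) ^ D) :
    ∃ C : ℝ, ∃ D : ℕ, 0 ≤ C ∧ ∀ ξ, ‖∑ j ∈ s, g j ξ‖ ≤ C * (1 + ‖ξ‖) ^ D := by
  classical
  induction s using Finset.induction_on with
  | empty => exact ⟨0, 0, le_refl 0, by simp⟩
  | @insert a s ha ih =>
      obtain ⟨C1, D1, hC1, h1⟩ := h a (Finset.mem_insert_self a s)
      obtain ⟨C2, D2, hC2, h2⟩ := ih (fun j hj => h j (Finset.mem_insert_of_mem hj))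
      refine ⟨C1 + C2, max D1 D2, by positivity, fun ξ => ?_⟩
      have hb : (1 : ℝ) ≤ 1 + ‖ξ‖ := by simp [norm_nonneg]
      rw [Finset.sum_insert ha]
      calc ‖g a ξ + ∑ j ∈ s, g j ξ‖
          ≤ ‖g a ξ‖ + ‖∑ j ∈ s, g j ξ‖ := norm_add_le _ _
        _ ≤ C1 * (1 + ‖ξ‖) ^ D1 + C2 * (1 + ‖ξ‖) ^ D2 := add_le_add (h1 ξ) (h2 ξ)
        _ ≤ C1 * (1 + ‖ξ‖) ^ max D1 D2 + C2 * (1 + ‖ξ‖) ^ max D1 D2 :=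
            add_le_add
              (mul_le_mul_of_nonneg_left (pow_le_pow_right₀ hb (le_max_left _ _)) hC1)
              (mul_le_mul_of_nonneg_left (pow_le_pow_right₀ hb (le_max_right _ _)) hC2)
        _ = (C1 + C2) * (1 + ‖ξ‖) ^ max D1 D2 := by ring

lemma schwartz_scaled_integrable (F : SchwartzMap (EuclideanSpace ℝ (Fin n)) ℂ)
    {c : ℝ} (hc : c ≠ 0) (d : ℕ) :
    Integrable (fun ξ : EuclideanSpace ℝ (Fin n) => (1 + ‖ξ‖) ^ d * ‖F (c • ξ)‖ ^ 2) := by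
  set k := n + 1 + d with hk
  set b := min 1 |c| with hb
  have hbpos : 0 < b := lt_min one_pos (abs_pos.mpr hc)
  obtain ⟨CF, hCF⟩ : ∃ CF : ℝ, ∀ η, (1 + ‖η‖) ^ k * ‖F η‖ ≤ CF := by
    refine ⟨2 ^ k * (Finset.Iic (k, 0)).sup (fun m => SchwartzMap.seminorm ℝ m.1 m.2) F,
      fun η => ?_⟩
    have := SchwartzMap.one_add_le_sup_seminorm_apply (𝕜 := ℝ) (m := (k, 0))
      le_rfl le_rfl F η
    simpa [norm_iteratedFDeriv_zero] using this
  have hCFnn : 0 ≤ CF := le_trans (by positivity) (hCF 0)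
  set M := SchwartzMap.seminorm ℝ 0 0 F with hM
  have hMB : ∀ η, ‖F η‖ ≤ M := fun η => SchwartzMap.norm_le_seminorm ℝ F η
  have hMnn : 0 ≤ M := le_trans (norm_nonneg _) (hMB 0)
  set K := CF / b ^ k * M with hK
  set r : ℝ := (n : ℝ) + 1 with hr
  have hint : Integrable (fun ξ : EuclideanSpace ℝ (Fin n) => K * (1 + ‖ξ‖) ^ (-r)) := by
    refine (integrable_one_add_norm ?_).const_mul K
    rw [finrank_euclideanSpace_fin]; exact lt_add_one _
  refine hint.mono' ?_ (Filter.Eventually.of_forall fun ξ => ?_)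
  · exact (((continuous_const.add continuous_norm).pow d).mul
      ((F.continuous.comp (continuous_id.const_smul c)).norm.pow 2)).aestronglyMeasurable
  · have hx : (0:ℝ) < 1 + ‖ξ‖ := by positivity
    have hnorm : ‖(1 + ‖ξ‖) ^ d * ‖F (c • ξ)‖ ^ 2‖ = (1 + ‖ξ‖) ^ d * ‖F (c • ξ)‖ ^ 2 :=
      Real.norm_of_nonneg (by positivity)
    rw [hnorm]
    have hpow : (1 + ‖ξ‖) ^ (-r) = (1 + ‖ξ‖) ^ (d : ℕ) / (1 + ‖ξ‖) ^ (k : ℕ) := by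
      rw [← Real.rpow_natCast _ d, ← Real.rpow_natCast _ k, ← Real.rpow_sub hx]
      congr 1
      rw [hk, hr]
      push_cast
      ring
    rw [hpow, mul_comm K, div_mul_eq_mul_div, mul_div_assoc]
    apply mul_le_mul_of_nonneg_left _ (by positivity : (0:ℝ) ≤ (1 + ‖ξ‖) ^ d)
    rw [le_div_iff₀ (by positivity : (0:ℝ) < (1 + ‖ξ‖) ^ k)]
    have step1 : b * (1 + ‖ξ‖) ≤ 1 + ‖c • ξ‖ := by
      rw [norm_smul, Real.norm_eq_abs]
      have h1 : b ≤ 1 := min_le_left _ _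
      have h2 : b ≤ |c| := min_le_right _ _
      nlinarith [norm_nonneg ξ, abs_nonneg c]
    have step2 : b ^ k * (1 + ‖ξ‖) ^ k ≤ (1 + ‖c • ξ‖) ^ k := by
      rw [← mul_pow]
      exact pow_le_pow_left₀ (by positivity) step1 k
    have step3 : (1 + ‖ξ‖) ^ k * ‖F (c • ξ)‖ ≤ CF / b ^ k := by
      rw [le_div_iff₀ (by positivity : (0:ℝ) < b ^ k)]
      calc (1 + ‖ξ‖) ^ k * ‖F (c • ξ)‖ * b ^ k
          = (b ^ k * (1 + ‖ξ‖) ^ k) * ‖F (c • ξ)‖ := by ring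
        _ ≤ (1 + ‖c • ξ‖) ^ k * ‖F (c • ξ)‖ :=
            mul_le_mul_of_nonneg_right step2 (norm_nonneg _)
        _ ≤ CF := hCF _
    calc ‖F (c • ξ)‖ ^ 2 * (1 + ‖ξ‖) ^ k
        = ((1 + ‖ξ‖) ^ k * ‖F (c • ξ)‖) * ‖F (c • ξ)‖ := by ring
      _ ≤ (CF / b ^ k) * M :=
          mul_le_mul step3 (hMB _) (norm_nonneg _) (by positivity)
      _ = K := rfl

end Aux

set_option maxHeartbeats 1000000 in
/-- the a priori estimate in `ℝⁿ` for an `N`-elliptic pencil. -/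
theorem statement15 (n m μ : ℕ) (hn : 1 ≤ n) (hμm : μ < m)
    (A : ℕ → EuclideanSpace ℝ (Fin n) → ℂ)
    (hA : ∀ j ∈ Finset.Icc (2 * μ) (2 * m), IsHomogPoly n j (A j))
    (hell : NElliptic m μ A) :
    ∀ lam0 : ℝ, 0 < lam0 → ∃ C > (0 : ℝ), ∀ lam : ℝ, lam0 ≤ lam →
      ∀ u : SchwartzMap (EuclideanSpace ℝ (Fin n)) ℂ,
        (∫ ξ : EuclideanSpace ℝ (Fin n),
            (1 + ‖ξ‖ ^ 2) ^ μ * (lam ^ 2 + ‖ξ‖ ^ 2) ^ (m - μ) * ‖myFourier (⇑u) ξ‖ ^ 2)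
          ≤ C * ((∫ ξ : EuclideanSpace ℝ (Fin n),
                ‖pencil m μ A ξ lam‖ ^ 2 * ‖myFourier (⇑u) ξ‖ ^ 2
                  / ((1 + ‖ξ‖ ^ 2) ^ μ * (lam ^ 2 + ‖ξ‖ ^ 2) ^ (m - μ)))
              + lam ^ (2 * m - 2 * μ) * ∫ x : EuclideanSpace ℝ (Fin n), ‖u x‖ ^ 2) := by
  classical
  obtain ⟨Ce, hCe, helli⟩ := hell
  intro lam0 hlam0
  set C1 : ℝ := ((2:ℝ) ^ μ / Ce) ^ 2 with hC1def
  set C2 : ℝ := (2:ℝ) ^ μ * (1 + lam0⁻¹ ^ 2) ^ (m - μ) with hC2def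
  have hC1nn : 0 ≤ C1 := by positivity
  have hC2nn : 0 ≤ C2 := by positivity
  refine ⟨max C1 C2 + 1, by positivity, fun lam hlam u => ?_⟩
  set C : ℝ := max C1 C2 + 1 with hCdef
  have hC1le : C1 ≤ C := by
    have := le_max_left C1 C2; simp only [hCdef]; linarith
  have hC2le : C2 ≤ C := by
    have := le_max_right C1 C2; simp only [hCdef]; linarith
  have hlamp : 0 < lam := lt_of_lt_of_le hlam0 hlam
  have hlam2 : (0:ℝ) < lam ^ 2 := pow_pos hlamp 2
  have hmexp : 2 * (m - μ) = 2 * m - 2 * μ := by omega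
  -- positivity of the weight
  have hwpos : ∀ ξ : EuclideanSpace ℝ (Fin n),
      0 < (1 + ‖ξ‖ ^ 2) ^ μ * (lam ^ 2 + ‖ξ‖ ^ 2) ^ (m - μ) := by
    intro ξ
    have h2 : (0:ℝ) < lam ^ 2 + ‖ξ‖ ^ 2 := by nlinarith [sq_nonneg ‖ξ‖]
    have h1 : (0:ℝ) < 1 + ‖ξ‖ ^ 2 := by positivity
    exact mul_pos (pow_pos h1 μ) (pow_pos h2 (m - μ))
  have hNnn : ∀ ξ : EuclideanSpace ℝ (Fin n), 0 ≤ ‖myFourier (⇑u) ξ‖ ^ 2 :=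
    fun ξ => by positivity
  -- the Schwartz Fourier transform
  obtain ⟨F, hFeq⟩ : ∃ F : SchwartzMap (EuclideanSpace ℝ (Fin n)) ℂ,
      ⇑F = FourierTransform.fourier ⇑u :=
    ⟨SchwartzMap.fourierTransformCLM ℂ u, SchwartzMap.fourier_coe u⟩
  set c2 : ℝ := (2 * Real.pi) ^ (-(n : ℝ)) with hc2def
  have hc2pos : 0 < c2 := by rw [hc2def]; positivity
  set cinv : ℝ := (2 * Real.pi)⁻¹ with hcinvdef
  have hcinv : cinv ≠ 0 := by rw [hcinvdef]; positivity
  have hgF : ∀ ξ : EuclideanSpace ℝ (Fin n),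
      ‖myFourier (⇑u) ξ‖ ^ 2 = c2 * ‖F (cinv • ξ)‖ ^ 2 := by
    intro ξ
    rw [norm_myFourier_sq (⇑u) ξ, ← hFeq]
  -- continuity facts
  have hNcont : Continuous (fun ξ : EuclideanSpace ℝ (Fin n) => ‖myFourier (⇑u) ξ‖ ^ 2) := by
    have h : (fun ξ : EuclideanSpace ℝ (Fin n) => ‖myFourier (⇑u) ξ‖ ^ 2)
        = fun ξ => c2 * ‖F (cinv • ξ)‖ ^ 2 := funext hgF
    rw [h]
    exact continuous_const.mul ((F.continuous.comp (continuous_id.const_smul cinv)).norm.pow 2)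
  have hwcont : Continuous (fun ξ : EuclideanSpace ℝ (Fin n) =>
      (1 + ‖ξ‖ ^ 2) ^ μ * (lam ^ 2 + ‖ξ‖ ^ 2) ^ (m - μ)) :=
    ((continuous_const.add (continuous_norm.pow 2)).pow μ).mul
      ((continuous_const.add (continuous_norm.pow 2)).pow (m - μ))
  have hAcont : ∀ j ∈ Finset.Icc (2 * μ) (2 * m), Continuous (A j) := by
    intro j hj
    obtain ⟨p, hp⟩ := (hA j hj).1
    have h : A j = fun ξ => MvPolynomial.eval (fun i => ((ξ i : ℝ) : ℂ)) p := funext hp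
    rw [h]
    exact (MvPolynomial.continuous_eval (p := p)).comp
      (continuous_pi fun i => Complex.continuous_ofReal.comp (EuclideanSpace.proj i).continuous)
  have hPcont : Continuous (fun ξ : EuclideanSpace ℝ (Fin n) => pencil m μ A ξ lam) := by
    show Continuous fun ξ : EuclideanSpace ℝ (Fin n) =>
      ∑ j ∈ Finset.Icc (2 * μ) (2 * m), (lam : ℂ) ^ (2 * m - j) * A j ξ
    exact continuous_finset_sum _ fun j hj => continuous_const.mul (hAcont j hj)
  -- growth of the pencil
  obtain ⟨Cp, Dp, hCp, hPb⟩ : ∃ Cp : ℝ, ∃ Dp : ℕ, 0 ≤ Cp ∧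
      ∀ ξ : EuclideanSpace ℝ (Fin n),
        ‖pencil m μ A ξ lam‖ ≤ Cp * (1 + ‖ξ‖) ^ Dp := by
    apply growth_sum (Finset.Icc (2 * μ) (2 * m))
      (g := fun j ξ => (lam : ℂ) ^ (2 * m - j) * A j ξ)
    intro j hj
    obtain ⟨p, hp⟩ := (hA j hj).1
    obtain ⟨Cq, Dq, hCq, hq⟩ := poly_growth p
    refine ⟨|lam| ^ (2 * m - j) * Cq, Dq, by positivity, fun ξ => ?_⟩
    rw [norm_mul, norm_pow, Complex.norm_real, Real.norm_eq_abs, hp ξ, mul_assoc]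
    exact mul_le_mul_of_nonneg_left (hq ξ) (by positivity)
  -- integrability facts
  have hInt3 : Integrable (fun ξ : EuclideanSpace ℝ (Fin n) => ‖myFourier (⇑u) ξ‖ ^ 2) := by
    refine ((schwartz_scaled_integrable F hcinv 0).const_mul c2).congr ?_
    filter_upwards with ξ
    rw [pow_zero, one_mul, ← hgF ξ]
  have hInt1 : Integrable (fun ξ : EuclideanSpace ℝ (Fin n) =>
      (1 + ‖ξ‖ ^ 2) ^ μ * (lam ^ 2 + ‖ξ‖ ^ 2) ^ (m - μ) * ‖myFourier (⇑u) ξ‖ ^ 2) := by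
    set d1 : ℕ := 2 * μ + 2 * (m - μ) with hd1
    set K1 : ℝ := (1 + lam ^ 2) ^ (m - μ) * c2 with hK1
    refine ((schwartz_scaled_integrable F hcinv d1).const_mul K1).mono'
      ((hwcont.mul hNcont).aestronglyMeasurable) (Filter.Eventually.of_forall fun ξ => ?_)
    have hwle : (1 + ‖ξ‖ ^ 2) ^ μ * (lam ^ 2 + ‖ξ‖ ^ 2) ^ (m - μ)
        ≤ (1 + lam ^ 2) ^ (m - μ) * (1 + ‖ξ‖) ^ d1 := by
      have e1 : (1 + ‖ξ‖ ^ 2) ≤ (1 + ‖ξ‖) ^ 2 := by nlinarith [norm_nonneg ξ]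
      have e2 : (lam ^ 2 + ‖ξ‖ ^ 2) ≤ (1 + lam ^ 2) * (1 + ‖ξ‖) ^ 2 := by
        nlinarith [norm_nonneg ξ, sq_nonneg lam, sq_nonneg ‖ξ‖]
      calc (1 + ‖ξ‖ ^ 2) ^ μ * (lam ^ 2 + ‖ξ‖ ^ 2) ^ (m - μ)
          ≤ ((1 + ‖ξ‖) ^ 2) ^ μ * ((1 + lam ^ 2) * (1 + ‖ξ‖) ^ 2) ^ (m - μ) :=
            mul_le_mul (pow_le_pow_left₀ (by positivity) e1 μ)
              (pow_le_pow_left₀ (by positivity) e2 (m - μ)) (by positivity) (by positivity)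
        _ = (1 + lam ^ 2) ^ (m - μ) * (1 + ‖ξ‖) ^ d1 := by
            rw [mul_pow, ← pow_mul, ← pow_mul, hd1, pow_add]
            ring
    rw [Real.norm_of_nonneg (by positivity)]
    calc (1 + ‖ξ‖ ^ 2) ^ μ * (lam ^ 2 + ‖ξ‖ ^ 2) ^ (m - μ) * ‖myFourier (⇑u) ξ‖ ^ 2
        = (1 + ‖ξ‖ ^ 2) ^ μ * (lam ^ 2 + ‖ξ‖ ^ 2) ^ (m - μ) * (c2 * ‖F (cinv • ξ)‖ ^ 2) := by
          rw [hgF ξ]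
      _ ≤ ((1 + lam ^ 2) ^ (m - μ) * (1 + ‖ξ‖) ^ d1) * (c2 * ‖F (cinv • ξ)‖ ^ 2) :=
          mul_le_mul_of_nonneg_right hwle (by positivity)
      _ = K1 * ((1 + ‖ξ‖) ^ d1 * ‖F (cinv • ξ)‖ ^ 2) := by rw [hK1]; ring
  have hInt2 : Integrable (fun ξ : EuclideanSpace ℝ (Fin n) =>
      ‖pencil m μ A ξ lam‖ ^ 2 * ‖myFourier (⇑u) ξ‖ ^ 2
        / ((1 + ‖ξ‖ ^ 2) ^ μ * (lam ^ 2 + ‖ξ‖ ^ 2) ^ (m - μ))) := by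
    set lw : ℝ := (lam ^ 2) ^ (m - μ) with hlw
    have hlwpos : 0 < lw := pow_pos hlam2 _
    set K2 : ℝ := Cp ^ 2 * c2 / lw with hK2
    have hK2nn : 0 ≤ K2 := by positivity
    refine ((schwartz_scaled_integrable F hcinv (2 * Dp)).const_mul K2).mono'
      ((((continuous_norm.comp hPcont).pow 2).mul hNcont).div hwcont
        (fun ξ => (hwpos ξ).ne')).aestronglyMeasurable
      (Filter.Eventually.of_forall fun ξ => ?_)
    have hwge : lw ≤ (1 + ‖ξ‖ ^ 2) ^ μ * (lam ^ 2 + ‖ξ‖ ^ 2) ^ (m - μ) := by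
      calc lw = 1 * (lam ^ 2) ^ (m - μ) := (one_mul _).symm
        _ ≤ (1 + ‖ξ‖ ^ 2) ^ μ * (lam ^ 2 + ‖ξ‖ ^ 2) ^ (m - μ) :=
          mul_le_mul (one_le_pow₀ (by nlinarith [sq_nonneg ‖ξ‖]))
            (pow_le_pow_left₀ (by positivity) (by nlinarith [sq_nonneg ‖ξ‖]) _)
            (by positivity) (by positivity)
    have hPsq : ‖pencil m μ A ξ lam‖ ^ 2 ≤ Cp ^ 2 * (1 + ‖ξ‖) ^ (2 * Dp) := by
      calc ‖pencil m μ A ξ lam‖ ^ 2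
          ≤ (Cp * (1 + ‖ξ‖) ^ Dp) ^ 2 := pow_le_pow_left₀ (norm_nonneg _) (hPb ξ) 2
        _ = Cp ^ 2 * (1 + ‖ξ‖) ^ (2 * Dp) := by rw [mul_pow, ← pow_mul, mul_comm Dp 2]
    rw [Real.norm_of_nonneg (div_nonneg (by positivity) (hwpos ξ).le)]
    rw [div_le_iff₀ (hwpos ξ)]
    calc ‖pencil m μ A ξ lam‖ ^ 2 * ‖myFourier (⇑u) ξ‖ ^ 2
        = ‖pencil m μ A ξ lam‖ ^ 2 * (c2 * ‖F (cinv • ξ)‖ ^ 2) := by rw [hgF ξ]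
      _ ≤ (Cp ^ 2 * (1 + ‖ξ‖) ^ (2 * Dp)) * (c2 * ‖F (cinv • ξ)‖ ^ 2) :=
          mul_le_mul_of_nonneg_right hPsq (by positivity)
      _ = K2 * ((1 + ‖ξ‖) ^ (2 * Dp) * ‖F (cinv • ξ)‖ ^ 2) * lw := by
          rw [hK2]; field_simp
      _ ≤ K2 * ((1 + ‖ξ‖) ^ (2 * Dp) * ‖F (cinv • ξ)‖ ^ 2)
            * ((1 + ‖ξ‖ ^ 2) ^ μ * (lam ^ 2 + ‖ξ‖ ^ 2) ^ (m - μ)) :=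
          mul_le_mul_of_nonneg_left hwge (by positivity)
  -- the pointwise inequality
  have hpt : ∀ ξ : EuclideanSpace ℝ (Fin n),
      (1 + ‖ξ‖ ^ 2) ^ μ * (lam ^ 2 + ‖ξ‖ ^ 2) ^ (m - μ) * ‖myFourier (⇑u) ξ‖ ^ 2
        ≤ C1 * (‖pencil m μ A ξ lam‖ ^ 2 * ‖myFourier (⇑u) ξ‖ ^ 2
            / ((1 + ‖ξ‖ ^ 2) ^ μ * (lam ^ 2 + ‖ξ‖ ^ 2) ^ (m - μ)))
          + (C2 * lam ^ (2 * m - 2 * μ)) * ‖myFourier (⇑u) ξ‖ ^ 2 := by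
    intro ξ
    have hf2nn : 0 ≤ ‖pencil m μ A ξ lam‖ ^ 2 * ‖myFourier (⇑u) ξ‖ ^ 2
        / ((1 + ‖ξ‖ ^ 2) ^ μ * (lam ^ 2 + ‖ξ‖ ^ 2) ^ (m - μ)) :=
      div_nonneg (by positivity) (hwpos ξ).le
    by_cases hξ : 1 ≤ ‖ξ‖
    · -- high frequency: use ellipticity
      have hwle : (1 + ‖ξ‖ ^ 2) ^ μ * (lam ^ 2 + ‖ξ‖ ^ 2) ^ (m - μ)
          ≤ (2 ^ μ / Ce) * ‖pencil m μ A ξ lam‖ := by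
        have e1 : (1 + ‖ξ‖ ^ 2) ≤ 2 * ‖ξ‖ ^ 2 := by nlinarith
        have e2 : (lam ^ 2 + ‖ξ‖ ^ 2) ≤ (lam + ‖ξ‖) ^ 2 := by
          nlinarith [norm_nonneg ξ, hlamp.le]
        have hell2 : Ce * ‖ξ‖ ^ (2 * μ) * (lam + ‖ξ‖) ^ (2 * m - 2 * μ)
            ≤ ‖pencil m μ A ξ lam‖ := helli ξ lam hlamp.le
        calc (1 + ‖ξ‖ ^ 2) ^ μ * (lam ^ 2 + ‖ξ‖ ^ 2) ^ (m - μ)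
            ≤ (2 * ‖ξ‖ ^ 2) ^ μ * ((lam + ‖ξ‖) ^ 2) ^ (m - μ) :=
              mul_le_mul (pow_le_pow_left₀ (by positivity) e1 μ)
                (pow_le_pow_left₀ (by positivity) e2 (m - μ)) (by positivity) (by positivity)
          _ = 2 ^ μ * (‖ξ‖ ^ (2 * μ) * (lam + ‖ξ‖) ^ (2 * m - 2 * μ)) := by
              rw [mul_pow, ← pow_mul, ← pow_mul, hmexp]
              ring
          _ ≤ (2 ^ μ / Ce) * ‖pencil m μ A ξ lam‖ := by
              rw [div_mul_eq_mul_div, le_div_iff₀ hCe]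
              calc 2 ^ μ * (‖ξ‖ ^ (2 * μ) * (lam + ‖ξ‖) ^ (2 * m - 2 * μ)) * Ce
                  = 2 ^ μ * (Ce * ‖ξ‖ ^ (2 * μ) * (lam + ‖ξ‖) ^ (2 * m - 2 * μ)) := by ring
                _ ≤ 2 ^ μ * ‖pencil m μ A ξ lam‖ :=
                    mul_le_mul_of_nonneg_left hell2 (by positivity)
      have key : (1 + ‖ξ‖ ^ 2) ^ μ * (lam ^ 2 + ‖ξ‖ ^ 2) ^ (m - μ) * ‖myFourier (⇑u) ξ‖ ^ 2
          ≤ C1 * (‖pencil m μ A ξ lam‖ ^ 2 * ‖myFourier (⇑u) ξ‖ ^ 2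
              / ((1 + ‖ξ‖ ^ 2) ^ μ * (lam ^ 2 + ‖ξ‖ ^ 2) ^ (m - μ))) := by
        rw [← mul_div_assoc, le_div_iff₀ (hwpos ξ)]
        have hsq : ((1 + ‖ξ‖ ^ 2) ^ μ * (lam ^ 2 + ‖ξ‖ ^ 2) ^ (m - μ))
            * ((1 + ‖ξ‖ ^ 2) ^ μ * (lam ^ 2 + ‖ξ‖ ^ 2) ^ (m - μ))
            ≤ C1 * ‖pencil m μ A ξ lam‖ ^ 2 := by
          rw [hC1def]
          nlinarith [hwle, (hwpos ξ).le, norm_nonneg (pencil m μ A ξ lam)]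
        calc (1 + ‖ξ‖ ^ 2) ^ μ * (lam ^ 2 + ‖ξ‖ ^ 2) ^ (m - μ) * ‖myFourier (⇑u) ξ‖ ^ 2
              * ((1 + ‖ξ‖ ^ 2) ^ μ * (lam ^ 2 + ‖ξ‖ ^ 2) ^ (m - μ))
            = (((1 + ‖ξ‖ ^ 2) ^ μ * (lam ^ 2 + ‖ξ‖ ^ 2) ^ (m - μ))
                * ((1 + ‖ξ‖ ^ 2) ^ μ * (lam ^ 2 + ‖ξ‖ ^ 2) ^ (m - μ))) * ‖myFourier (⇑u) ξ‖ ^ 2 := by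
              ring
          _ ≤ (C1 * ‖pencil m μ A ξ lam‖ ^ 2) * ‖myFourier (⇑u) ξ‖ ^ 2 :=
              mul_le_mul_of_nonneg_right hsq (hNnn ξ)
          _ = C1 * (‖pencil m μ A ξ lam‖ ^ 2 * ‖myFourier (⇑u) ξ‖ ^ 2) := by ring
      have : 0 ≤ (C2 * lam ^ (2 * m - 2 * μ)) * ‖myFourier (⇑u) ξ‖ ^ 2 := by positivity
      linarith
    · -- low frequency
      push_neg at hξ
      have hwle : (1 + ‖ξ‖ ^ 2) ^ μ * (lam ^ 2 + ‖ξ‖ ^ 2) ^ (m - μ)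
          ≤ C2 * lam ^ (2 * m - 2 * μ) := by
        have e1 : (1 + ‖ξ‖ ^ 2) ≤ 2 := by nlinarith [norm_nonneg ξ]
        have hdiv : 1 ≤ lam / lam0 := (one_le_div hlam0).mpr hlam
        have e2 : (lam ^ 2 + ‖ξ‖ ^ 2) ≤ (1 + lam0⁻¹ ^ 2) * lam ^ 2 := by
          have h1 : (1:ℝ) ≤ lam0⁻¹ ^ 2 * lam ^ 2 := by
            have h := one_le_pow₀ (n := 2) hdiv
            calc (1:ℝ) ≤ (lam / lam0) ^ 2 := h
              _ = lam0⁻¹ ^ 2 * lam ^ 2 := by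
                  rw [div_pow, div_eq_mul_inv, ← inv_pow]
                  ring
          nlinarith [norm_nonneg ξ]
        calc (1 + ‖ξ‖ ^ 2) ^ μ * (lam ^ 2 + ‖ξ‖ ^ 2) ^ (m - μ)
            ≤ 2 ^ μ * ((1 + lam0⁻¹ ^ 2) * lam ^ 2) ^ (m - μ) :=
              mul_le_mul (pow_le_pow_left₀ (by positivity) e1 μ)
                (pow_le_pow_left₀ (by positivity) e2 (m - μ)) (by positivity) (by positivity)
          _ = C2 * lam ^ (2 * m - 2 * μ) := by
              rw [hC2def, mul_pow, ← pow_mul, hmexp]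
              ring
      have key : (1 + ‖ξ‖ ^ 2) ^ μ * (lam ^ 2 + ‖ξ‖ ^ 2) ^ (m - μ) * ‖myFourier (⇑u) ξ‖ ^ 2
          ≤ (C2 * lam ^ (2 * m - 2 * μ)) * ‖myFourier (⇑u) ξ‖ ^ 2 :=
        mul_le_mul_of_nonneg_right hwle (hNnn ξ)
      have : 0 ≤ C1 * (‖pencil m μ A ξ lam‖ ^ 2 * ‖myFourier (⇑u) ξ‖ ^ 2
          / ((1 + ‖ξ‖ ^ 2) ^ μ * (lam ^ 2 + ‖ξ‖ ^ 2) ^ (m - μ))) :=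
        mul_nonneg hC1nn hf2nn
      linarith
  -- assembling
  have hInt2' := hInt2.const_mul C1
  have hInt3' := hInt3.const_mul (C2 * lam ^ (2 * m - 2 * μ))
  have hf2intnn : 0 ≤ ∫ ξ : EuclideanSpace ℝ (Fin n),
      ‖pencil m μ A ξ lam‖ ^ 2 * ‖myFourier (⇑u) ξ‖ ^ 2
        / ((1 + ‖ξ‖ ^ 2) ^ μ * (lam ^ 2 + ‖ξ‖ ^ 2) ^ (m - μ)) :=
    integral_nonneg fun ξ => div_nonneg (by positivity) (hwpos ξ).le
  have huintnn : 0 ≤ ∫ x : EuclideanSpace ℝ (Fin n), ‖u x‖ ^ 2 :=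
    integral_nonneg fun x => by positivity
  have hlamnn : (0:ℝ) ≤ lam ^ (2 * m - 2 * μ) := by positivity
  calc (∫ ξ : EuclideanSpace ℝ (Fin n),
        (1 + ‖ξ‖ ^ 2) ^ μ * (lam ^ 2 + ‖ξ‖ ^ 2) ^ (m - μ) * ‖myFourier (⇑u) ξ‖ ^ 2)
      ≤ ∫ ξ : EuclideanSpace ℝ (Fin n),
          (C1 * (‖pencil m μ A ξ lam‖ ^ 2 * ‖myFourier (⇑u) ξ‖ ^ 2
            / ((1 + ‖ξ‖ ^ 2) ^ μ * (lam ^ 2 + ‖ξ‖ ^ 2) ^ (m - μ)))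
          + (C2 * lam ^ (2 * m - 2 * μ)) * ‖myFourier (⇑u) ξ‖ ^ 2) :=
        integral_mono hInt1 (hInt2'.add hInt3') hpt
    _ = C1 * (∫ ξ : EuclideanSpace ℝ (Fin n),
          ‖pencil m μ A ξ lam‖ ^ 2 * ‖myFourier (⇑u) ξ‖ ^ 2
            / ((1 + ‖ξ‖ ^ 2) ^ μ * (lam ^ 2 + ‖ξ‖ ^ 2) ^ (m - μ)))
        + (C2 * lam ^ (2 * m - 2 * μ)) * ∫ ξ : EuclideanSpace ℝ (Fin n), ‖myFourier (⇑u) ξ‖ ^ 2 := by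
        rw [integral_add hInt2' hInt3', integral_const_mul, integral_const_mul]
    _ = C1 * (∫ ξ : EuclideanSpace ℝ (Fin n),
          ‖pencil m μ A ξ lam‖ ^ 2 * ‖myFourier (⇑u) ξ‖ ^ 2
            / ((1 + ‖ξ‖ ^ 2) ^ μ * (lam ^ 2 + ‖ξ‖ ^ 2) ^ (m - μ)))
        + (C2 * lam ^ (2 * m - 2 * μ)) * ∫ x : EuclideanSpace ℝ (Fin n), ‖u x‖ ^ 2 := by
        rw [integral_norm_myFourier_sq u]
    _ ≤ C * ((∫ ξ : EuclideanSpace ℝ (Fin n),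
          ‖pencil m μ A ξ lam‖ ^ 2 * ‖myFourier (⇑u) ξ‖ ^ 2
            / ((1 + ‖ξ‖ ^ 2) ^ μ * (lam ^ 2 + ‖ξ‖ ^ 2) ^ (m - μ)))
        + lam ^ (2 * m - 2 * μ) * ∫ x : EuclideanSpace ℝ (Fin n), ‖u x‖ ^ 2) := by
        have h1 := mul_le_mul_of_nonneg_right hC1le hf2intnn
        have h2 := mul_le_mul_of_nonneg_right hC2le
          (mul_nonneg hlamnn huintnn)
        calc C1 * (∫ ξ : EuclideanSpace ℝ (Fin n),
              ‖pencil m μ A ξ lam‖ ^ 2 * ‖myFourier (⇑u) ξ‖ ^ 2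
                / ((1 + ‖ξ‖ ^ 2) ^ μ * (lam ^ 2 + ‖ξ‖ ^ 2) ^ (m - μ)))
            + (C2 * lam ^ (2 * m - 2 * μ)) * ∫ x : EuclideanSpace ℝ (Fin n), ‖u x‖ ^ 2
            = C1 * (∫ ξ : EuclideanSpace ℝ (Fin n),
              ‖pencil m μ A ξ lam‖ ^ 2 * ‖myFourier (⇑u) ξ‖ ^ 2
                / ((1 + ‖ξ‖ ^ 2) ^ μ * (lam ^ 2 + ‖ξ‖ ^ 2) ^ (m - μ)))
            + C2 * (lam ^ (2 * m - 2 * μ) * ∫ x : EuclideanSpace ℝ (Fin n), ‖u x‖ ^ 2) := by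
              ring
          _ ≤ C * (∫ ξ : EuclideanSpace ℝ (Fin n),
              ‖pencil m μ A ξ lam‖ ^ 2 * ‖myFourier (⇑u) ξ‖ ^ 2
                / ((1 + ‖ξ‖ ^ 2) ^ μ * (lam ^ 2 + ‖ξ‖ ^ 2) ^ (m - μ)))
            + C * (lam ^ (2 * m - 2 * μ) * ∫ x : EuclideanSpace ℝ (Fin n), ‖u x‖ ^ 2) :=
              add_le_add h1 h2
          _ = C * ((∫ ξ : EuclideanSpace ℝ (Fin n),
              ‖pencil m μ A ξ lam‖ ^ 2 * ‖myFourier (⇑u) ξ‖ ^ 2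
                / ((1 + ‖ξ‖ ^ 2) ^ μ * (lam ^ 2 + ‖ξ‖ ^ 2) ^ (m - μ)))
            + lam ^ (2 * m - 2 * μ) * ∫ x : EuclideanSpace ℝ (Fin n), ‖u x‖ ^ 2) := by
              ring


end
end

section
/- Let A(ξ,λ) = Σ_{j=2μ}^{2m} λ^{2m−j} A_j(ξ) be N-elliptic with parameter in [0,∞). Then for every λ₀ > 0 there exists a constant C = C(λ₀) > 0 such that for all λ ≥ λ₀ and all ξ ∈ ℝⁿ the pointwise inequality (1+|ξ|²)^μ (λ²+|ξ|²)^{m−μ} ≤ C ( |A(ξ,λ)|² (1+|ξ|²)^{−μ} (λ²+|ξ|²)^{−(m−μ)} + λ^{2m−2μ} ) holds. -/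
open MeasureTheory Finset Polynomial

noncomputable section

set_option maxHeartbeats 1000000 in
/-- the pointwise inequality behind the a priori estimate in `ℝⁿ`. -/
theorem statement16 (n m μ : ℕ) (hn : 1 ≤ n) (hμm : μ < m)
    (A : ℕ → EuclideanSpace ℝ (Fin n) → ℂ)
    (hA : ∀ j ∈ Finset.Icc (2 * μ) (2 * m), IsHomogPoly n j (A j))
    (hell : NElliptic m μ A) :
    ∀ lam0 : ℝ, 0 < lam0 → ∃ C > (0 : ℝ), ∀ lam : ℝ, lam0 ≤ lam →
      ∀ ξ : EuclideanSpace ℝ (Fin n),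
        (1 + ‖ξ‖ ^ 2) ^ μ * (lam ^ 2 + ‖ξ‖ ^ 2) ^ (m - μ)
          ≤ C * (‖pencil m μ A ξ lam‖ ^ 2
                / ((1 + ‖ξ‖ ^ 2) ^ μ * (lam ^ 2 + ‖ξ‖ ^ 2) ^ (m - μ))
              + lam ^ (2 * m - 2 * μ)) := by
  intro lam0 hlam0
  obtain ⟨C0, hC0, hC⟩ := hell
  set K1 : ℝ := 2 ^ μ * (1 + 1 / lam0 ^ 2) ^ (m - μ) with hK1
  set K2 : ℝ := (2 ^ μ / C0) ^ 2 with hK2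
  have hK1pos : 0 < K1 := by positivity
  have hK2pos : 0 < K2 := by positivity
  refine ⟨max K1 K2, lt_max_of_lt_left hK1pos, ?_⟩
  intro lam hlam ξ
  have hlampos : 0 < lam := lt_of_lt_of_le hlam0 hlam
  set x := ‖ξ‖ with hxdef
  have hx : 0 ≤ x := norm_nonneg _
  set P : ℝ := (1 + x ^ 2) ^ μ * (lam ^ 2 + x ^ 2) ^ (m - μ) with hP
  have hPpos : 0 < P := by positivity
  set Aab := ‖pencil m μ A ξ lam‖ with hAab
  have hAnn : 0 ≤ Aab := norm_nonneg _
  have hAbound : C0 * x ^ (2 * μ) * (lam + x) ^ (2 * m - 2 * μ) ≤ Aab :=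
    hC ξ lam hlampos.le
  have hdivnn : 0 ≤ Aab ^ 2 / P := by positivity
  have hlamnn : 0 ≤ lam ^ (2 * m - 2 * μ) := by positivity
  have hmaxK1 : K1 ≤ max K1 K2 := le_max_left _ _
  have hmaxK2 : K2 ≤ max K1 K2 := le_max_right _ _
  have he : 2 * (m - μ) = 2 * m - 2 * μ := by omega
  rcases le_total x 1 with hx1 | hx1
  · -- small ξ : P ≤ K1 * lam ^ (2m - 2μ)
    have h1 : (1 + x ^ 2) ^ μ ≤ 2 ^ μ := by
      apply pow_le_pow_left₀ (by positivity)
      nlinarith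
    have hll : 1 ≤ lam ^ 2 / lam0 ^ 2 := by
      rw [le_div_iff₀ (by positivity)]
      nlinarith
    have h2 : (lam ^ 2 + x ^ 2) ^ (m - μ) ≤ ((1 + 1 / lam0 ^ 2) * lam ^ 2) ^ (m - μ) := by
      apply pow_le_pow_left₀ (by positivity)
      have : x ^ 2 ≤ lam ^ 2 / lam0 ^ 2 := by nlinarith
      rw [mul_comm, mul_add, mul_one_div]
      linarith
    have hkey : P ≤ K1 * lam ^ (2 * m - 2 * μ) := by
      have : P ≤ 2 ^ μ * ((1 + 1 / lam0 ^ 2) * lam ^ 2) ^ (m - μ) := by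
        apply mul_le_mul h1 h2 (by positivity) (by positivity)
      calc P ≤ 2 ^ μ * ((1 + 1 / lam0 ^ 2) * lam ^ 2) ^ (m - μ) := this
        _ = K1 * lam ^ (2 * (m - μ)) := by
            rw [mul_pow, pow_mul, hK1]; ring
        _ = K1 * lam ^ (2 * m - 2 * μ) := by rw [he]
    have h3 : K1 * lam ^ (2 * m - 2 * μ) ≤ max K1 K2 * lam ^ (2 * m - 2 * μ) :=
      mul_le_mul_of_nonneg_right hmaxK1 hlamnn
    have h4 : 0 ≤ max K1 K2 * (Aab ^ 2 / P) := mul_nonneg (by positivity) hdivnn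
    rw [mul_add]; linarith
  · -- large ξ : P ≤ (2^μ / C0) * Aab
    have h1 : (1 + x ^ 2) ^ μ ≤ 2 ^ μ * x ^ (2 * μ) := by
      calc (1 + x ^ 2) ^ μ ≤ (2 * x ^ 2) ^ μ := by
            apply pow_le_pow_left₀ (by positivity); nlinarith
        _ = 2 ^ μ * x ^ (2 * μ) := by rw [mul_pow, pow_mul]
    have h2 : (lam ^ 2 + x ^ 2) ^ (m - μ) ≤ (lam + x) ^ (2 * m - 2 * μ) := by
      rw [← he, pow_mul]
      apply pow_le_pow_left₀ (by positivity)
      nlinarith [mul_nonneg hlampos.le hx]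
    have hkey : P ≤ (2 ^ μ / C0) * Aab := by
      have hstep : P ≤ 2 ^ μ * (x ^ (2 * μ) * (lam + x) ^ (2 * m - 2 * μ)) := by
        calc P ≤ (2 ^ μ * x ^ (2 * μ)) * ((lam + x) ^ (2 * m - 2 * μ)) :=
              mul_le_mul h1 h2 (by positivity) (by positivity)
          _ = 2 ^ μ * (x ^ (2 * μ) * (lam + x) ^ (2 * m - 2 * μ)) := by ring
      have : C0 * (x ^ (2 * μ) * (lam + x) ^ (2 * m - 2 * μ)) ≤ Aab := by
        rw [← mul_assoc]; exact hAbound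
      rw [div_mul_eq_mul_div, le_div_iff₀ hC0]
      nlinarith [pow_pos (by norm_num : (0:ℝ) < 2) μ]
    have hP2 : P * P ≤ K2 * Aab ^ 2 := by
      have h2 : 0 ≤ (2 ^ μ / C0) * Aab := by positivity
      calc P * P ≤ ((2 ^ μ / C0) * Aab) * ((2 ^ μ / C0) * Aab) :=
            mul_le_mul hkey hkey hPpos.le h2
        _ = K2 * Aab ^ 2 := by rw [hK2]; ring
    have hkey2 : P ≤ K2 * (Aab ^ 2 / P) := by
      rw [mul_div_assoc'] at *
      rw [le_div_iff₀ hPpos]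
      exact hP2
    have h3 : K2 * (Aab ^ 2 / P) ≤ max K1 K2 * (Aab ^ 2 / P) :=
      mul_le_mul_of_nonneg_right hmaxK2 hdivnn
    have h4 : 0 ≤ max K1 K2 * lam ^ (2 * m - 2 * μ) := mul_nonneg (by positivity) hlamnn
    rw [mul_add]; linarith
end
end
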